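/- arXiv:1607.07468 — 4 statements merged into one kernel-verified Lean document; each statement's English description precedes it below -/
import Mathlib

section
/- Let (M,L) be a concircularly recurrent Finsler manifold of dimension n ≥ 3 with recurrence form A. If ∇^h r − r A ≠ 0, then (M,L) is generalized recurrent: ∇^h R = A ⊗ R + B ⊗ G with B := (1/(n(n−1)))(∇^h r − r A) ≠ 0. -/
/- Abstract setting for the pullback approach to Finsler geometry.
   `F` plays the role of the ring of smooth functions on `TM`,
   `V` the module of π-vector fields.  The structure packages the data of a
   Finsler manifold `(M,L)` with its Cartan connection: the Finsler metric `g`,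
   the h-curvature tensor `R`, the fundamental vector field `eta`, the
   horizontal Ricci tensor `Ric` (trace of `R`), the Ricci operator `Ric0`,
   the horizontal scalar curvature `r`, and the h-covariant derivative
   operators `Dh0, Dh1, Dh2, Dh3` (on scalars, 1-forms, (0,2)-tensors and
   vector-valued (1,3)-tensors, the first argument of the result being the
   direction of differentiation) together with the second-derivative
   operators `Dh1b, Dh2b, Dh3b`.  `invN` and `invn` are the inverses of the
   functions `n(n-1)` and `n`.  The axioms record the standard facts used in
   the paper: Leibniz rules, metricity (∇ʰG = 0), trace compatibilities, and
   the consequences of horizontal integrability (R̂ = 0): the Bianchi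
   identities, pair symmetry, symmetry of Ric, the Ricci identity and the
   vanishing lemma for 2-forms. -/
structure FinslerRec (F : Type*) (V : Type*) [CommRing F] [AddCommGroup V] [Module F V] where
  n : ℕ
  g : V → V → F
  R : V → V → V → V
  eta : V
  Ric : V → V → F
  Ric0 : V → V
  r : F
  invN : F
  invn : F
  Dh0 : F → V → F
  Dh1 : (V → F) → V → V → F
  Dh1b : (V → V → F) → V → V → V → F
  Dh2 : (V → V → F) → V → V → V → F
  Dh2b : (V → V → V → F) → V → V → V → V → F
  Dh3 : (V → V → V → V) → V → V → V → V → V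
  Dh3b : (V → V → V → V → V) → V → V → V → V → V → V
  tr13 : (V → V → V → V) → V → V → F
  tr02 : (V → V → F) → F
  invN_mul : invN * ((n * (n - 1) : ℕ) : F) = 1
  invn_mul : invn * (n : F) = 1
  g_Ric0 : ∀ X Y, g (Ric0 X) Y = Ric X Y
  tr13_R : tr13 R = Ric
  tr13_G : ∀ X Y, tr13 (fun a b c => g a c • b - g b c • a) X Y = ((n : F) - 1) * g X Y
  tr13_add : ∀ T S X Y, tr13 (fun a b c => T a b c + S a b c) X Y = tr13 T X Y + tr13 S X Y
  tr13_smul : ∀ (f : F) T X Y, tr13 (fun a b c => f • T a b c) X Y = f * tr13 T X Y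
  tr13_Dh : ∀ T X Y Z, tr13 (Dh3 T X) Y Z = Dh2 (tr13 T) X Y Z
  tr02_Ric : tr02 Ric = r
  tr02_g : tr02 g = (n : F)
  tr02_add : ∀ ω σ, tr02 (fun a b => ω a b + σ a b) = tr02 ω + tr02 σ
  tr02_smul : ∀ (f : F) ω, tr02 (fun a b => f * ω a b) = f * tr02 ω
  tr02_Dh : ∀ ω X, tr02 (fun a b => Dh2 ω X a b) = Dh0 (tr02 ω) X
  DhG_eq_zero : ∀ X a b c, Dh3 (fun x y z => g x z • y - g y z • x) X a b c = 0
  Dh3_add : ∀ T S X a b c, Dh3 (fun x y z => T x y z + S x y z) X a b c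
      = Dh3 T X a b c + Dh3 S X a b c
  Dh3_smulF : ∀ (f : F) T X a b c, Dh3 (fun x y z => f • T x y z) X a b c
      = Dh0 f X • T a b c + f • Dh3 T X a b c
  Dh3b_add : ∀ P Q X Y a b c, Dh3b (fun x y z w => P x y z w + Q x y z w) X Y a b c
      = Dh3b P X Y a b c + Dh3b Q X Y a b c
  Dh3b_tens : ∀ (A : V → F) T X Y a b c, Dh3b (fun x y z w => A x • T y z w) X Y a b c
      = Dh1 A X Y • T a b c + A Y • Dh3 T X a b c
  Dh2b_add : ∀ P Q X Y a b, Dh2b (fun x y z => P x y z + Q x y z) X Y a b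
      = Dh2b P X Y a b + Dh2b Q X Y a b
  Dh2b_tens : ∀ (A : V → F) (ω : V → V → F) X Y a b, Dh2b (fun x y z => A x * ω y z) X Y a b
      = Dh1 A X Y * ω a b + A Y * Dh2 ω X a b
  bianchi1 : (∀ X Y, R X Y eta = 0) → ∀ X Y Z, R X Y Z + R Y Z X + R Z X Y = 0
  pair_sym : (∀ X Y, R X Y eta = 0) → ∀ X Y Z W, g (R X Y Z) W = g (R Z W X) Y
  bianchi2 : (∀ X Y, R X Y eta = 0) → ∀ X Y Z W,
      Dh3 R X Y Z W + Dh3 R Y Z X W + Dh3 R Z X Y W = 0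
  ric_symm : (∀ X Y, R X Y eta = 0) → ∀ X Y, Ric X Y = Ric Y X
  ricci_id1 : (∀ X Y, R X Y eta = 0) → ∀ (A : V → F) X Y Z,
      Dh1b (Dh1 A) Y X Z - Dh1b (Dh1 A) X Y Z = - A (R X Y Z)
  vanish_R : (∀ X Y, R X Y eta = 0) → ∀ ω : V → V → F,
      (∀ u v w x y z, ω u v * g (R w x y) z + ω w x * g (R y z u) v
        + ω y z * g (R u v w) x = 0) → ∀ X Y, ω X Y = 0
  vanish_G : (∀ X Y, R X Y eta = 0) → ∀ ω : V → V → F,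
      (∀ u v w x y z, ω u v * g (g w y • x - g x y • w) z
        + ω w x * g (g y u • z - g z u • y) v
        + ω y z * g (g u w • v - g v w • u) x = 0) → ∀ X Y, ω X Y = 0

namespace FinslerRec

variable {F : Type*} {V : Type*} [CommRing F] [AddCommGroup V] [Module F V] (S : FinslerRec F V)

/-- The tensor `G(X,Y)Z = g(X,Z)Y - g(Y,Z)X`. -/
def G : V → V → V → V := fun X Y Z => S.g X Z • Y - S.g Y Z • X

/-- The concircular curvature tensor `C = R - (r/(n(n-1))) G`. -/
def C : V → V → V → V := fun X Y Z => S.R X Y Z - (S.invN * S.r) • S.G X Y Z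

/-- The (0,4) curvature tensor `𝐑(X,Y,Z,W) = g(R(X,Y)Z, W)`. -/
def bR : V → V → V → V → F := fun X Y Z W => S.g (S.R X Y Z) W

/-- The (0,4) concircular tensor `𝐂(X,Y,Z,W) = g(C(X,Y)Z, W)`. -/
def bC : V → V → V → V → F := fun X Y Z W => S.g (S.C X Y Z) W

/-- The action of the curvature operator `R(X,Y)` as a derivation on (0,4)-tensors. -/
def Rdot (X Y : V) (T : V → V → V → V → F) : V → V → V → V → F :=
  fun Z W U P => -(T (S.R X Y Z) W U P) - T Z (S.R X Y W) U P
    - T Z W (S.R X Y U) P - T Z W U (S.R X Y P)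

/-- Horizontal integrability: the (v)h-torsion `R̂(X,Y) = R(X,Y)η̄` vanishes. -/
def HorizontallyIntegrable : Prop := ∀ X Y, S.R X Y S.eta = 0

/-- Recurrent: `∇ʰR = A ⊗ R` with `A` a non-zero 1-form. -/
def Recurrent (A : V → F) : Prop :=
  A ≠ 0 ∧ ∀ X Z W U, S.Dh3 S.R X Z W U = A X • S.R Z W U

/-- 2-recurrent: `∇ʰ∇ʰR = α ⊗ R` with `α` a non-zero 2-form. -/
def TwoRecurrent (α : V → V → F) : Prop :=
  α ≠ 0 ∧ ∀ X Y Z W U, S.Dh3b (S.Dh3 S.R) X Y Z W U = α X Y • S.R Z W U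

/-- Generalized recurrent: `∇ʰR = A ⊗ R + B ⊗ G`, `A, B` non-zero 1-forms. -/
def GenRecurrent (A B : V → F) : Prop :=
  A ≠ 0 ∧ B ≠ 0 ∧ ∀ X Z W U, S.Dh3 S.R X Z W U = A X • S.R Z W U + B X • S.G Z W U

/-- Generalized 2-recurrent: `∇ʰ∇ʰR = α ⊗ R + μ ⊗ G`, `α, μ` non-zero 2-forms. -/
def Gen2Recurrent (α μ : V → V → F) : Prop :=
  α ≠ 0 ∧ μ ≠ 0 ∧ ∀ X Y Z W U,
    S.Dh3b (S.Dh3 S.R) X Y Z W U = α X Y • S.R Z W U + μ X Y • S.G Z W U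

/-- Ricci recurrent: `∇ʰRic = A ⊗ Ric`, `A` a non-zero 1-form. -/
def RicciRecurrent (A : V → F) : Prop :=
  A ≠ 0 ∧ ∀ X Y Z, S.Dh2 S.Ric X Y Z = A X * S.Ric Y Z

/-- 2-Ricci recurrent: `∇ʰ∇ʰRic = α ⊗ Ric`, `α` a non-zero 2-form. -/
def TwoRicciRecurrent (α : V → V → F) : Prop :=
  α ≠ 0 ∧ ∀ X Y Z W, S.Dh2b (S.Dh2 S.Ric) X Y Z W = α X Y * S.Ric Z W

/-- Generalized Ricci recurrent: `∇ʰRic = A ⊗ Ric + B ⊗ g`. -/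
def GenRicciRecurrent (A B : V → F) : Prop :=
  A ≠ 0 ∧ B ≠ 0 ∧ ∀ X Y Z, S.Dh2 S.Ric X Y Z = A X * S.Ric Y Z + B X * S.g Y Z

/-- Concircularly recurrent: `∇ʰC = A ⊗ C`, `A` a non-zero 1-form. -/
def ConcRecurrent (A : V → F) : Prop :=
  A ≠ 0 ∧ ∀ X Z W U, S.Dh3 S.C X Z W U = A X • S.C Z W U

/-- 2-concircularly recurrent: `∇ʰ∇ʰC = α ⊗ C`, `α` a non-zero 2-form. -/
def TwoConcRecurrent (α : V → V → F) : Prop :=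
  α ≠ 0 ∧ ∀ X Y Z W U, S.Dh3b (S.Dh3 S.C) X Y Z W U = α X Y • S.C Z W U

/-- Generalized concircularly recurrent: `∇ʰC = A ⊗ C + B ⊗ G`. -/
def GenConcRecurrent (A B : V → F) : Prop :=
  A ≠ 0 ∧ B ≠ 0 ∧ ∀ X Z W U, S.Dh3 S.C X Z W U = A X • S.C Z W U + B X • S.G Z W U

/-- Generalized 2-concircularly recurrent: `∇ʰ∇ʰC = α ⊗ C + μ ⊗ G`. -/
def Gen2ConcRecurrent (α μ : V → V → F) : Prop :=
  α ≠ 0 ∧ μ ≠ 0 ∧ ∀ X Y Z W U,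
    S.Dh3b (S.Dh3 S.C) X Y Z W U = α X Y • S.C Z W U + μ X Y • S.G Z W U

end FinslerRec
/-- Theorem 4.2(b): a concircularly recurrent Finsler manifold of dimension
`n ≥ 3` with recurrence form `A` such that `∇ʰr − rA ≠ 0` is generalized
recurrent with recurrence forms `A` and `B = (1/(n(n-1)))(∇ʰr − rA)`. -/
theorem concRecurrent_is_genRecurrent
    {F : Type*} {V : Type*} [CommRing F] [AddCommGroup V] [Module F V]
    (S : FinslerRec F V) (hn : 3 ≤ S.n) (A : V → F)
    (hrec : S.ConcRecurrent A)
    (hB : (fun X => S.Dh0 S.r X - S.r * A X) ≠ 0) :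
    S.GenRecurrent A (fun X => S.invN * (S.Dh0 S.r X - S.r * A X)) := by

  obtain ⟨hA, hC⟩ := hrec
  set f : F := S.invN * S.r with hf
  set c : V → F := fun X => S.Dh0 f X - A X * f with hc
  -- Step 1: ∇R = A ⊗ R + c ⊗ G
  have hRC : S.R = fun x y z => S.C x y z + f • S.G x y z := by
    funext x y z
    simp [FinslerRec.C, hf]
  have eq1 : ∀ X a b c', S.Dh3 S.R X a b c'
      = A X • S.R a b c' + c X • S.G a b c' := by
    intro X a b c'
    have h1 : S.Dh3 S.R X a b c'
        = S.Dh3 (fun x y z => S.C x y z + f • S.G x y z) X a b c' := by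
      rw [← hRC]
    rw [h1, S.Dh3_add, S.Dh3_smulF]
    have hG0 : S.Dh3 S.G X a b c' = 0 := S.DhG_eq_zero X a b c'
    rw [hG0, hC X a b c']
    simp only [FinslerRec.C, hc]
    rw [smul_sub, sub_smul]
    rw [smul_smul, mul_smul, smul_zero, add_zero]
    abel
  -- Step 2: trace once
  have eq2 : ∀ X Y Z, S.Dh2 S.Ric X Y Z
      = A X * S.Ric Y Z + (c X * ((S.n : F) - 1)) * S.g Y Z := by
    intro X Y Z
    have h1 : S.Dh2 S.Ric X Y Z = S.tr13 (S.Dh3 S.R X) Y Z := by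
      rw [S.tr13_Dh, S.tr13_R]
    have h2 : S.Dh3 S.R X = fun a b c' =>
        A X • S.R a b c' + c X • S.G a b c' := by
      funext a b c'; exact eq1 X a b c'
    rw [h1, h2]
    have h3 : S.tr13 (fun a b c' => A X • S.R a b c' + c X • S.G a b c') Y Z
        = S.tr13 (fun a b c' => A X • S.R a b c') Y Z
          + S.tr13 (fun a b c' => c X • S.G a b c') Y Z := S.tr13_add _ _ Y Z
    rw [h3, S.tr13_smul, S.tr13_smul, S.tr13_R]
    have h4 : S.tr13 S.G Y Z = ((S.n : F) - 1) * S.g Y Z := S.tr13_G Y Z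
    rw [h4]; ring
  -- Step 3: trace twice
  have eq3 : ∀ X, S.Dh0 S.r X
      = A X * S.r + (c X * ((S.n : F) - 1)) * (S.n : F) := by
    intro X
    have h1 : S.Dh0 S.r X = S.tr02 (fun a b => S.Dh2 S.Ric X a b) := by
      rw [S.tr02_Dh, S.tr02_Ric]
    rw [h1]
    have h2 : (fun a b => S.Dh2 S.Ric X a b)
        = fun a b => A X * S.Ric a b + (c X * ((S.n : F) - 1)) * S.g a b := by
      funext a b; exact eq2 X a b
    rw [h2, S.tr02_add, S.tr02_smul, S.tr02_smul, S.tr02_Ric, S.tr02_g]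
  -- cast fact
  have hcast : ((S.n * (S.n - 1) : ℕ) : F) = (S.n : F) * ((S.n : F) - 1) := by
    have h1 : 1 ≤ S.n := by omega
    push_cast [Nat.cast_sub h1]
    ring
  have hNmul : S.invN * ((S.n : F) * ((S.n : F) - 1)) = 1 := by
    rw [← hcast]; exact S.invN_mul
  -- Step 4: B = c
  have eq4 : ∀ X, S.invN * (S.Dh0 S.r X - S.r * A X) = c X := by
    intro X
    have := eq3 X
    have h5 : S.Dh0 S.r X - S.r * A X = c X * ((S.n : F) * ((S.n : F) - 1)) := by
      rw [this]; ring
    rw [h5]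
    calc S.invN * (c X * ((S.n : F) * ((S.n : F) - 1)))
        = c X * (S.invN * ((S.n : F) * ((S.n : F) - 1))) := by ring
      _ = c X := by rw [hNmul, mul_one]
  refine ⟨hA, ?_, ?_⟩
  · intro h0
    apply hB
    funext X
    have h1 : S.invN * (S.Dh0 S.r X - S.r * A X) = 0 := congrFun h0 X
    have h2 : ((S.n : F) * ((S.n : F) - 1)) * (S.invN * (S.Dh0 S.r X - S.r * A X))
        = 0 := by rw [h1, mul_zero]
    have h3 : S.Dh0 S.r X - S.r * A X
        = ((S.n : F) * ((S.n : F) - 1)) * (S.invN * (S.Dh0 S.r X - S.r * A X)) := by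
      rw [show ((S.n : F) * ((S.n : F) - 1)) * (S.invN * (S.Dh0 S.r X - S.r * A X))
        = (S.invN * ((S.n : F) * ((S.n : F) - 1))) * (S.Dh0 S.r X - S.r * A X) by ring,
        hNmul, one_mul]
    simp only [Pi.zero_apply]
    rw [h3, h2]
  · intro X Z W U
    rw [eq1 X Z W U]
    show A X • S.R Z W U + c X • S.G Z W U
      = A X • S.R Z W U + (S.invN * (S.Dh0 S.r X - S.r * A X)) • S.G Z W U
    rw [eq4 X]
end

section
/- Let (M,L) be a concircularly recurrent Finsler manifold of dimension n ≥ 3 with recurrence form A and ∇^h r − r A ≠ 0. Then (M,L) is generalized Ricci recurrent: ∇^h Ric = A ⊗ Ric + B₁ ⊗ g, where B₁ = (1/n)(∇^h r − r A). -/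
/-- Theorem 4.2(b): a concircularly recurrent Finsler manifold of dimension
`n ≥ 3` with recurrence form `A` such that `∇ʰr − rA ≠ 0` is generalized
Ricci recurrent with recurrence forms `A` and `B₁ = (1/n)(∇ʰr − rA)`. -/
theorem concRecurrent_is_genRicciRecurrent
    {F : Type*} {V : Type*} [CommRing F] [AddCommGroup V] [Module F V]
    (S : FinslerRec F V) (hn : 3 ≤ S.n) (A : V → F)
    (hrec : S.ConcRecurrent A)
    (hB : (fun X => S.Dh0 S.r X - S.r * A X) ≠ 0) :
    S.GenRicciRecurrent A (fun X => S.invn * (S.Dh0 S.r X - S.r * A X)) := by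
  obtain ⟨hA, hC⟩ := hrec
  have h1n : 1 ≤ S.n := by omega
  have hn1 : ((S.n - 1 : ℕ) : F) = (S.n : F) - 1 := by
    rw [Nat.cast_sub h1n, Nat.cast_one]
  have hc : S.invN * ((S.n : F) * ((S.n : F) - 1)) = 1 := by
    have := S.invN_mul
    rwa [Nat.cast_mul, hn1] at this
  have hinv : S.invN * ((S.n : F) - 1) = S.invn := by
    calc S.invN * ((S.n : F) - 1)
        = (S.invN * ((S.n : F) - 1)) * (S.invn * (S.n : F)) := by rw [S.invn_mul]; ring
      _ = S.invn * (S.invN * ((S.n : F) * ((S.n : F) - 1))) := by ring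
      _ = S.invn := by rw [hc]; ring
  set c : V → F := fun X => S.Dh0 (S.invN * S.r) X - A X * (S.invN * S.r) with hcdef
  have hRfun : S.R = fun x y z => S.C x y z
      + (S.invN * S.r) • (S.g x z • y - S.g y z • x) := by
    funext x y z
    simp [FinslerRec.C, FinslerRec.G]
  have key : ∀ X a b c', S.Dh3 S.R X a b c'
      = A X • S.R a b c' + (c X) • (S.g a c' • b - S.g b c' • a) := by
    intro X a b c'
    conv_lhs => rw [hRfun]
    rw [S.Dh3_add, S.Dh3_smulF, S.DhG_eq_zero, hC]
    simp only [FinslerRec.C, FinslerRec.G, hcdef, smul_sub, sub_smul, smul_zero]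
    module
  have key2 : ∀ X Y Z, S.Dh2 S.Ric X Y Z
      = A X * S.Ric Y Z + (c X * ((S.n : F) - 1)) * S.g Y Z := by
    intro X Y Z
    have h1 : S.Dh2 S.Ric X Y Z = S.tr13 (S.Dh3 S.R X) Y Z := by
      rw [S.tr13_Dh, S.tr13_R]
    have h2 : S.Dh3 S.R X = (fun a b c' =>
        (fun a b c' => A X • S.R a b c') a b c'
        + (fun a b c' => (c X) • (S.g a c' • b - S.g b c' • a)) a b c') := by
      funext a b c'; exact key X a b c'
    rw [h1, h2, S.tr13_add, S.tr13_smul, S.tr13_smul, S.tr13_R, S.tr13_G]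
    ring
  have key3 : ∀ X, S.Dh0 S.r X
      = A X * S.r + (c X * ((S.n : F) - 1)) * (S.n : F) := by
    intro X
    have h1 : S.tr02 (fun a b => S.Dh2 S.Ric X a b) = S.Dh0 S.r X := by
      rw [S.tr02_Dh, S.tr02_Ric]
    have h2 : (fun a b => S.Dh2 S.Ric X a b) = (fun a b =>
        (fun a b => A X * S.Ric a b) a b
        + (fun a b => (c X * ((S.n : F) - 1)) * S.g a b) a b) := by
      funext a b; exact key2 X a b
    rw [← h1, h2, S.tr02_add, S.tr02_smul, S.tr02_smul, S.tr02_Ric, S.tr02_g]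
  have keyc : ∀ X, c X = S.invN * (S.Dh0 S.r X - S.r * A X) := by
    intro X
    have h4 : S.Dh0 S.r X - S.r * A X = c X * ((S.n : F) * ((S.n : F) - 1)) := by
      rw [key3 X]; ring
    rw [h4, show S.invN * (c X * ((S.n : F) * ((S.n : F) - 1)))
        = c X * (S.invN * ((S.n : F) * ((S.n : F) - 1))) from by ring, hc, mul_one]
  refine ⟨hA, ?_, ?_⟩
  · intro h0
    apply hB
    funext X
    have h5 : S.invn * (S.Dh0 S.r X - S.r * A X) = 0 := congrFun h0 X
    have h6 : (S.Dh0 S.r X - S.r * A X)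
        = (S.invn * (S.Dh0 S.r X - S.r * A X)) * (S.n : F) := by
      rw [show (S.invn * (S.Dh0 S.r X - S.r * A X)) * (S.n : F)
          = (S.Dh0 S.r X - S.r * A X) * (S.invn * (S.n : F)) from by ring, S.invn_mul, mul_one]
    simp only [Pi.zero_apply]
    rw [h6, h5, zero_mul]
  · intro X Y Z
    rw [key2 X Y Z, keyc X, ← hinv]
    ring
end

section
/- If (M,L) is a generalized recurrent Finsler manifold of dimension n ≥ 3 with recurrence forms A, B (∇^h R = A ⊗ R + B ⊗ G), then double contraction gives ∇^h r = r A + n(n−1) B, and consequently (M,L) is concircularly recurrent: ∇^h C = A ⊗ C. -/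
/-- Theorem 5.1(b): on a generalized recurrent Finsler manifold of dimension
`n ≥ 3` with recurrence forms `A, B`, double contraction gives
`∇ʰr = rA + n(n−1)B`, and the manifold is concircularly recurrent with
recurrence form `A`. -/
theorem genRecurrent_is_concRecurrent
    {F : Type*} {V : Type*} [CommRing F] [AddCommGroup V] [Module F V]
    (S : FinslerRec F V) (hn : 3 ≤ S.n) (A B : V → F)
    (hrec : S.GenRecurrent A B) :
    (∀ X, S.Dh0 S.r X = S.r * A X + ((S.n * (S.n - 1) : ℕ) : F) * B X) ∧
    S.ConcRecurrent A := by
  obtain ⟨hA, hB, hDR⟩ := hrec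
  have hNcast : ((S.n * (S.n - 1) : ℕ) : F) = (S.n : F) * ((S.n : F) - 1) := by
    push_cast [Nat.cast_sub (by omega : 1 ≤ S.n)]
    ring
  have hinv : S.invN * ((S.n : F) * ((S.n : F) - 1)) = 1 := by
    rw [← hNcast]; exact S.invN_mul
  set f : F := S.invN * S.r with hf
  -- Step 1: first contraction
  have hRic : ∀ X Y Z, S.Dh2 S.Ric X Y Z
      = A X * S.Ric Y Z + (B X * ((S.n : F) - 1)) * S.g Y Z := by
    intro X Y Z
    have h1 : S.Dh3 S.R X = fun a b c =>
        (fun a b c => A X • S.R a b c) a b c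
        + (fun a b c => B X • (S.g a c • b - S.g b c • a)) a b c := by
      funext a b c
      rw [hDR]; rfl
    calc S.Dh2 S.Ric X Y Z = S.Dh2 (S.tr13 S.R) X Y Z := by rw [S.tr13_R]
    _ = S.tr13 (S.Dh3 S.R X) Y Z := (S.tr13_Dh _ _ _ _).symm
    _ = _ := by
        rw [h1, S.tr13_add, S.tr13_smul, S.tr13_smul, S.tr13_R, S.tr13_G]
        ring
  -- Step 2: second contraction
  have hr : ∀ X, S.Dh0 S.r X = S.r * A X + ((S.n * (S.n - 1) : ℕ) : F) * B X := by
    intro X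
    have h2 : (fun a b => S.Dh2 S.Ric X a b)
        = fun a b => A X * S.Ric a b + (B X * ((S.n : F) - 1)) * S.g a b := by
      funext a b; exact hRic X a b
    calc S.Dh0 S.r X = S.Dh0 (S.tr02 S.Ric) X := by rw [S.tr02_Ric]
    _ = S.tr02 (fun a b => S.Dh2 S.Ric X a b) := (S.tr02_Dh _ _).symm
    _ = A X * S.r + (B X * ((S.n : F) - 1)) * (S.n : F) := by
        rw [h2, S.tr02_add, S.tr02_smul, S.tr02_smul, S.tr02_Ric, S.tr02_g]
    _ = _ := by rw [hNcast]; ring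
  -- derivative of f • G
  have hDh3fG : ∀ X a b c,
      S.Dh3 (fun x y z => f • (S.g x z • y - S.g y z • x)) X a b c
      = S.Dh0 f X • (S.g a c • b - S.g b c • a) := by
    intro X a b c
    rw [S.Dh3_smulF, S.DhG_eq_zero, smul_zero, add_zero]
  -- contraction trick: relate Dh0 f to Dh0 r
  have hcontr : ∀ X, S.Dh0 S.r X = S.Dh0 f X * ((S.n : F) * ((S.n : F) - 1)) := by
    intro X
    have e1 : S.tr13 (fun x y z => f • (S.g x z • y - S.g y z • x))
        = fun a b => (f * ((S.n : F) - 1)) * S.g a b := by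
      funext Y Z; rw [S.tr13_smul, S.tr13_G]; ring
    have e2 : (fun a b =>
          S.Dh2 (S.tr13 (fun x y z => f • (S.g x z • y - S.g y z • x))) X a b)
        = fun a b => (S.Dh0 f X * ((S.n : F) - 1)) * S.g a b := by
      funext a b
      rw [← S.tr13_Dh]
      have h3 : S.Dh3 (fun x y z => f • (S.g x z • y - S.g y z • x)) X
          = fun a b c => S.Dh0 f X • (S.g a c • b - S.g b c • a) := by
        funext a' b' c'; exact hDh3fG X a' b' c'
      rw [h3, S.tr13_smul, S.tr13_G]; ring
    have e3 : S.tr02 (S.tr13 (fun x y z => f • (S.g x z • y - S.g y z • x))) = S.r := by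
      rw [e1, S.tr02_smul, S.tr02_g]
      calc f * ((S.n : F) - 1) * (S.n : F)
          = S.r * (S.invN * ((S.n : F) * ((S.n : F) - 1))) := by rw [hf]; ring
      _ = S.r := by rw [hinv, mul_one]
    calc S.Dh0 S.r X
        = S.Dh0 (S.tr02 (S.tr13 (fun x y z => f • (S.g x z • y - S.g y z • x)))) X := by
          rw [e3]
    _ = S.tr02 (fun a b =>
          S.Dh2 (S.tr13 (fun x y z => f • (S.g x z • y - S.g y z • x))) X a b) :=
          (S.tr02_Dh _ _).symm
    _ = (S.Dh0 f X * ((S.n : F) - 1)) * (S.n : F) := by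
          rw [e2, S.tr02_smul, S.tr02_g]
    _ = _ := by ring
  have hDf : ∀ X, S.Dh0 f X = f * A X + B X := by
    intro X
    have h4 : S.Dh0 f X = S.invN * S.Dh0 S.r X := by
      calc S.Dh0 f X
          = S.Dh0 f X * (S.invN * ((S.n : F) * ((S.n : F) - 1))) := by
            rw [hinv, mul_one]
      _ = S.invN * (S.Dh0 f X * ((S.n : F) * ((S.n : F) - 1))) := by ring
      _ = S.invN * S.Dh0 S.r X := by rw [← hcontr]
    rw [h4, hr X, hNcast, mul_add]
    congr 1
    · rw [hf]; ring
    · calc S.invN * ((S.n : F) * ((S.n : F) - 1) * B X)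
          = (S.invN * ((S.n : F) * ((S.n : F) - 1))) * B X := by ring
      _ = B X := by rw [hinv, one_mul]
  refine ⟨hr, hA, ?_⟩
  intro X Z W U
  have hsplit : S.R = fun x y z =>
      (fun x y z => S.C x y z) x y z
      + (fun x y z => f • (S.g x z • y - S.g y z • x)) x y z := by
    funext x y z
    simp [FinslerRec.C, FinslerRec.G, hf]
  have h5 : S.Dh3 S.R X Z W U
      = S.Dh3 S.C X Z W U + S.Dh0 f X • (S.g Z U • W - S.g W U • Z) := by
    calc S.Dh3 S.R X Z W U
        = S.Dh3 (fun x y z => (fun x y z => S.C x y z) x y z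
            + (fun x y z => f • (S.g x z • y - S.g y z • x)) x y z) X Z W U := by
          rw [← hsplit]
    _ = S.Dh3 (fun x y z => S.C x y z) X Z W U
        + S.Dh3 (fun x y z => f • (S.g x z • y - S.g y z • x)) X Z W U :=
          S.Dh3_add _ _ _ _ _ _
    _ = _ := by rw [hDh3fG]
  rw [hDR] at h5
  have h6 : S.Dh3 S.C X Z W U
      = A X • S.R Z W U + B X • S.G Z W U
        - (f * A X + B X) • (S.g Z U • W - S.g W U • Z) := by
    rw [← hDf X]
    exact eq_sub_of_add_eq h5.symm
  rw [h6]
  show _ = A X • (S.R Z W U - (S.invN * S.r) • S.G Z W U)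
  rw [show S.G Z W U = S.g Z U • W - S.g W U • Z from rfl, ← hf]
  module
end

section
/- If (M,L) is a generalized recurrent Finsler manifold of dimension n ≥ 3 with recurrence forms A, B, non-zero scalar curvature r, and with ∇^h A + A ⊗ A ≠ 0, then (M,L) is 2-concircularly recurrent: ∇^h ∇^h C = (∇^h A + A ⊗ A) ⊗ C. -/
section Aux
variable {F : Type*} {V : Type*} [CommRing F] [AddCommGroup V] [Module F V] (S : FinslerRec F V)

lemma dh0_add_smul (f g : F) (X v : V) :
    S.Dh0 (f + g) X • v = S.Dh0 f X • v + S.Dh0 g X • v := by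
  have h1 := S.Dh3_smulF (f + g) (fun _ _ _ => v) X 0 0 0
  have h2 := S.Dh3_add (fun _ _ _ => f • v) (fun _ _ _ => g • v) X 0 0 0
  have h3 := S.Dh3_smulF f (fun _ _ _ => v) X 0 0 0
  have h4 := S.Dh3_smulF g (fun _ _ _ => v) X 0 0 0
  beta_reduce at h1 h2 h3 h4
  have he : (fun _ _ _ : V => (f + g) • v) = (fun _ _ _ : V => f • v + g • v) := by
    funext _ _ _; rw [add_smul]
  rw [he, h2, h3, h4] at h1
  linear_combination (norm := module) -h1

lemma dh0_mul_smul (c f : F) (X v : V) :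
    S.Dh0 (c * f) X • v = (S.Dh0 c X * f) • v + (c * S.Dh0 f X) • v := by
  have h1 := S.Dh3_smulF (c * f) (fun _ _ _ => v) X 0 0 0
  have h2 := S.Dh3_smulF c (fun _ _ _ => f • v) X 0 0 0
  have h3 := S.Dh3_smulF f (fun _ _ _ => v) X 0 0 0
  beta_reduce at h1 h2 h3
  have he : (fun _ _ _ : V => (c * f) • v) = (fun _ _ _ : V => c • f • v) := by
    funext _ _ _; rw [mul_smul]
  rw [he, h2, h3] at h1
  -- h1 : Dh0 c X • f • v + c • (Dh0 f X • v + f • D) = Dh0 (c*f) X • v + (c*f) • D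
  linear_combination (norm := module) -h1

lemma dh0_zero_smul (X v : V) : S.Dh0 (0 : F) X • v = 0 := by
  have h := dh0_add_smul S 0 0 X v
  rw [add_zero] at h
  exact (left_eq_add.mp h)

lemma dh0_one_smul (X v : V) : S.Dh0 (1 : F) X • v = 0 := by
  have h := dh0_mul_smul S 1 1 X v
  rw [mul_one, one_mul, mul_one] at h
  exact (left_eq_add.mp h)

lemma dh0_nat_smul (k : ℕ) (X v : V) : S.Dh0 ((k : ℕ) : F) X • v = 0 := by
  induction k with
  | zero => simpa using dh0_zero_smul S X v
  | succ m ih =>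
      have h := dh0_add_smul S ((m : ℕ) : F) 1 X v
      rw [ih, dh0_one_smul] at h
      simpa [Nat.cast_succ] using h

lemma dh0_invN_smul (X v : V) : S.Dh0 S.invN X • v = 0 := by
  set N : F := ((S.n * (S.n - 1) : ℕ) : F) with hN
  have hNsmul : ∀ w : V, S.Dh0 N X • w = 0 := fun w => dh0_nat_smul S _ X w
  have h := dh0_mul_smul S S.invN N X v
  rw [S.invN_mul, dh0_one_smul] at h
  have h2 : (S.invN * S.Dh0 N X) • v = 0 := by
    rw [mul_smul, hNsmul, smul_zero]
  rw [h2, add_zero] at h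
  -- h : 0 = (Dh0 invN X * N) • v, for every v
  have key : ∀ w : V, (S.Dh0 S.invN X * N) • w = 0 := by
    intro w
    have h' := dh0_mul_smul S S.invN N X w
    rw [S.invN_mul, dh0_one_smul] at h'
    have h2' : (S.invN * S.Dh0 N X) • w = 0 := by
      rw [mul_smul, hNsmul, smul_zero]
    rw [h2', add_zero] at h'
    exact h'.symm
  have := key (S.invN • v)
  rw [smul_smul, mul_assoc, mul_comm N S.invN, S.invN_mul, mul_one] at this
  exact this

lemma dh0_neg_smul (f : F) (X v : V) : S.Dh0 (-f) X • v = -(S.Dh0 f X • v) := by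
  have h := dh0_add_smul S f (-f) X v
  rw [add_neg_cancel, dh0_zero_smul] at h
  exact (neg_eq_of_add_eq_zero_right h.symm).symm

end Aux
/-- Theorem 5.1(c): a generalized recurrent Finsler manifold of dimension
`n ≥ 3` with recurrence forms `A, B`, non-zero scalar curvature `r`, and
`∇ʰA + A ⊗ A ≠ 0` is 2-concircularly recurrent with 2-form `∇ʰA + A ⊗ A`. -/
theorem genRecurrent_is_twoConcRecurrent
    {F : Type*} {V : Type*} [CommRing F] [AddCommGroup V] [Module F V]
    (S : FinslerRec F V) (hn : 3 ≤ S.n) (A B : V → F)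
    (hrec : S.GenRecurrent A B) (hr : S.r ≠ 0)
    (hα : (fun X Y => S.Dh1 A X Y + A X * A Y) ≠ 0) :
    S.TwoConcRecurrent (fun X Y => S.Dh1 A X Y + A X * A Y) := by
  obtain ⟨hA0, hB0, hR⟩ := hrec
  refine ⟨hα, ?_⟩
  -- Step 1: trace of the generalized recurrence gives the Ricci derivative.
  have hRic : ∀ X Y Z, S.Dh2 S.Ric X Y Z
      = A X * S.Ric Y Z + (((S.n : F) - 1) * B X) * S.g Y Z := by
    intro X Y Z
    have h1 := S.tr13_Dh S.R X Y Z
    have he : S.Dh3 S.R X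
        = fun a b c => A X • S.R a b c + B X • (S.g a c • b - S.g b c • a) := by
      funext a b c; rw [hR]; rfl
    rw [he, S.tr13_add, S.tr13_smul, S.tr13_smul, S.tr13_R, S.tr13_G] at h1
    linear_combination -h1
  -- Step 2: second trace gives the derivative of the scalar curvature.
  have hDr : ∀ X, S.Dh0 S.r X = S.r * A X + (((S.n : F) - 1) * (S.n : F)) * B X := by
    intro X
    have h1 := S.tr02_Dh S.Ric X
    have he : (fun a b => S.Dh2 S.Ric X a b)
        = fun a b => A X * S.Ric a b + (((S.n : F) - 1) * B X) * S.g a b := by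
      funext a b; rw [hRic]
    rw [he, S.tr02_add, S.tr02_smul, S.tr02_smul, S.tr02_Ric, S.tr02_g] at h1
    linear_combination -h1
  have h1n : (1 : ℕ) ≤ S.n := by omega
  have hNc : ((S.n * (S.n - 1) : ℕ) : F) = (S.n : F) * ((S.n : F) - 1) := by
    rw [Nat.cast_mul, Nat.cast_sub h1n, Nat.cast_one]
  have hinv : S.invN * ((S.n : F) * ((S.n : F) - 1)) = 1 := by
    rw [← hNc]; exact S.invN_mul
  -- Step 3: the manifold is concircularly recurrent, ∇ʰC = A ⊗ C.
  have hC3 : ∀ X a b c, S.Dh3 S.C X a b c = A X • S.C a b c := by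
    intro X a b c
    have he : S.C = fun x y z =>
        S.R x y z + (-(S.invN * S.r)) • (S.g x z • y - S.g y z • x) := by
      funext x y z
      show S.R x y z - (S.invN * S.r) • S.G x y z = _
      rw [neg_smul, sub_eq_add_neg]; rfl
    have hD : ∀ w : V, S.Dh0 (-(S.invN * S.r)) X • w
        = (-(S.invN * S.r * A X) - B X) • w := by
      intro w
      rw [dh0_neg_smul]
      have h2 := dh0_mul_smul S S.invN S.r X w
      have h3 : (S.Dh0 S.invN X * S.r) • w = 0 := by
        rw [mul_comm, mul_smul, dh0_invN_smul, smul_zero]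
      rw [h3, zero_add, hDr] at h2
      rw [h2]
      match_scalars
      linear_combination (-(B X)) * hinv
    rw [he, S.Dh3_add, S.Dh3_smulF, S.DhG_eq_zero, hR, hD]
    simp only [FinslerRec.G]
    match_scalars <;> ring
  have hC3fun : S.Dh3 S.C = fun X a b c => A X • S.C a b c := by
    funext X a b c; exact hC3 X a b c
  -- Step 4: differentiate once more.
  intro X Y Z W U
  rw [hC3fun, S.Dh3b_tens A S.C X Y Z W U, hC3]
  match_scalars
  ring
end
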